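/- Let f be a positive definite integer quadratic form on ℝ² (f(x) = m·x₁² + k·x₁x₂ + n·x₂² with m, k, n ∈ ℤ and f(x) > 0 for all x ≠ 0) that admits an integer normed pairing. Then there exists an ℝ-linear isomorphism φ : ℝ² → ℂ which is orientation preserving (the determinant of the matrix of φ with respect to the standard basis of ℝ² and the basis (1, i) of ℂ is positive) such that f(x) = |φ(x)|² for all x ∈ ℝ², and the lattice L = φ(ℤ²) is stable under at least one of the four operations σ₁(z,w) = z·w, σ₂(z,w) = conj(z)·w, σ₃(z,w) = z·conj(w), σ₄(z,w) = conj(z·w), meaning σ_k(z,w) ∈ L for all z, w ∈ L. -/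

import Mathlib

/-- A vector of `ℝ × ℝ` lies in the integer lattice `ℤ²`. -/
def IsIntVec (x : ℝ × ℝ) : Prop := ∃ a b : ℤ, x = ((a : ℝ), (b : ℝ))

lemma ortho (u v : ℂ) (hn : Complex.normSq u = Complex.normSq v)
    (hre : (u * (starRingEnd ℂ) v).re = 0) :
    u = Complex.I * v ∨ u = -(Complex.I * v) := by
  by_cases hv : v = 0
  · left
    have : u = 0 := by
      have := hn
      rw [hv, Complex.normSq_zero, Complex.normSq_eq_zero] at this
      exact this
    simp [this, hv]
  · set t := u * v⁻¹ with ht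
    have hvn : Complex.normSq v ≠ 0 := by simpa [Complex.normSq_eq_zero] using hv
    have htn : Complex.normSq t = 1 := by
      rw [ht, Complex.normSq_mul, Complex.normSq_inv, hn]
      field_simp
    have htre : t.re = 0 := by
      rw [ht, Complex.inv_def, ← mul_assoc]
      rw [mul_comm (u * (starRingEnd ℂ) v) _]
      simp [Complex.re_ofReal_mul, hre]
    have htu : u = t * v := by
      rw [ht, mul_assoc, inv_mul_cancel₀ hv, mul_one]
    have him : t.im = 1 ∨ t.im = -1 := by
      rw [Complex.normSq_apply, htre] at htn
      simp only [zero_mul, zero_add] at htn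
      exact mul_self_eq_one_iff.mp htn
    rcases him with h | h
    · left
      rw [htu]
      congr 1
      exact Complex.ext htre (by rw [h, Complex.I_im])
    · right
      rw [htu, ← neg_mul]
      congr 1
      exact Complex.ext (by simp [htre]) (by simp [h])

lemma conj_expand (w : ℂ) : (starRingEnd ℂ) w = (w.re : ℂ) - (w.im : ℂ) * Complex.I := by
  rw [Complex.ext_iff]; simp

lemma isomClass (P : ℂ → ℂ)
    (hadd : ∀ z z', P (z + z') = P z + P z')
    (hsmul : ∀ (r : ℝ) (z : ℂ), P ((r : ℂ) * z) = (r : ℂ) * P z)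
    (hn : ∀ z, Complex.normSq (P z) = Complex.normSq z) :
    (∀ z, P z = P 1 * z) ∨ (∀ z, P z = P 1 * (starRingEnd ℂ) z) := by
  set c := P 1 with hc
  set d := P Complex.I with hd
  have hrep : ∀ z, P z = (z.re : ℂ) * c + (z.im : ℂ) * d := by
    intro z
    have h1 : P ((z.re : ℂ)) = (z.re : ℂ) * c := by
      rw [show ((z.re : ℂ)) = (z.re : ℂ) * 1 from (mul_one _).symm, hsmul, mul_one]
    conv_lhs => rw [← Complex.re_add_im z]
    rw [hadd, hsmul, h1]
  have hsum : Complex.normSq (c + d) = 2 := by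
    have h1 : P (1 + Complex.I) = c + d := by rw [hadd]
    have := hn (1 + Complex.I)
    rw [h1] at this
    rw [this, Complex.normSq_apply]
    simp
    norm_num
  have hre : (d * (starRingEnd ℂ) c).re = 0 := by
    have hexp : Complex.normSq (c + d) =
        Complex.normSq c + Complex.normSq d + 2 * (c * (starRingEnd ℂ) d).re :=
      Complex.normSq_add c d
    have hc1 : Complex.normSq c = 1 := by rw [hc]; simpa using hn 1
    have hd1 : Complex.normSq d = 1 := by rw [hd]; simpa using hn Complex.I
    have h0 : (c * (starRingEnd ℂ) d).re = 0 := by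
      rw [hsum, hc1, hd1] at hexp; linarith
    have : (d * (starRingEnd ℂ) c).re = (c * (starRingEnd ℂ) d).re := by
      simp [Complex.mul_re, Complex.conj_re, Complex.conj_im]; ring
    rw [this, h0]
  have hdc : d = Complex.I * c ∨ d = -(Complex.I * c) := by
    apply ortho
    · rw [hd, hc]; simp [hn]
    · exact hre
  rcases hdc with h | h
  · left
    intro z
    rw [hrep z, h]
    conv_rhs => rw [← Complex.re_add_im z]
    ring
  · right
    intro z
    rw [hrep z, h, conj_expand]
    ring

lemma keyClass (S : ℂ → ℂ → ℂ)
    (hadd1 : ∀ z z' w, S (z + z') w = S z w + S z' w)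
    (hsmul1 : ∀ (r : ℝ) z w, S ((r : ℂ) * z) w = (r : ℂ) * S z w)
    (hadd2 : ∀ z w w', S z (w + w') = S z w + S z w')
    (hsmul2 : ∀ (r : ℝ) z w, S z ((r : ℂ) * w) = (r : ℂ) * S z w)
    (hnorm : ∀ z w, Complex.normSq (S z w) = Complex.normSq z * Complex.normSq w) :
    ∃ c : ℂ, Complex.normSq c = 1 ∧
      ((∀ z w, S z w = c * (z * w)) ∨
       (∀ z w, S z w = c * ((starRingEnd ℂ) z * w)) ∨
       (∀ z w, S z w = c * (z * (starRingEnd ℂ) w)) ∨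
       (∀ z w, S z w = c * (starRingEnd ℂ) (z * w))) := by
  set P : ℂ → ℂ := fun z => S z 1 with hP
  set Q : ℂ → ℂ := fun z => S z Complex.I with hQ
  have hrep : ∀ z w, S z w = (w.re : ℂ) * P z + (w.im : ℂ) * Q z := by
    intro z w
    have h1 : S z ((w.re : ℂ)) = (w.re : ℂ) * P z := by
      conv_lhs => rw [show ((w.re : ℂ)) = (w.re : ℂ) * 1 from (mul_one _).symm]
      rw [hsmul2]
    conv_lhs => rw [← Complex.re_add_im w]
    rw [hadd2, hsmul2, h1]
  have hPn : ∀ z, Complex.normSq (P z) = Complex.normSq z := by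
    intro z; simpa using hnorm z 1
  have hQn : ∀ z, Complex.normSq (Q z) = Complex.normSq z := by
    intro z; simpa using hnorm z Complex.I
  have hPadd : ∀ z z', P (z + z') = P z + P z' := fun z z' => hadd1 z z' 1
  have hQadd : ∀ z z', Q (z + z') = Q z + Q z' := fun z z' => hadd1 z z' Complex.I
  have hPsmul : ∀ (r : ℝ) z, P ((r : ℂ) * z) = (r : ℂ) * P z := fun r z => hsmul1 r z 1
  have hre : ∀ z, (Q z * (starRingEnd ℂ) (P z)).re = 0 := by
    intro z
    have h1 : S z (1 + Complex.I) = P z + Q z := by rw [hadd2]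
    have h2 := hnorm z (1 + Complex.I)
    rw [h1] at h2
    have h3 : Complex.normSq (1 + Complex.I) = 2 := by
      rw [Complex.normSq_apply]; simp; norm_num
    rw [h3, Complex.normSq_add, hPn, hQn] at h2
    have h0 : (P z * (starRingEnd ℂ) (Q z)).re = 0 := by linarith
    have : (Q z * (starRingEnd ℂ) (P z)).re = (P z * (starRingEnd ℂ) (Q z)).re := by
      simp [Complex.mul_re, Complex.conj_re, Complex.conj_im]; ring
    rw [this, h0]
  have hpt : ∀ z, Q z = Complex.I * P z ∨ Q z = -(Complex.I * P z) := by
    intro z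
    apply ortho
    · rw [hPn, hQn]
    · exact hre z
  have hglob : (∀ z, Q z = Complex.I * P z) ∨ (∀ z, Q z = -(Complex.I * P z)) := by
    by_cases h1 : ∀ z, Q z = Complex.I * P z
    · exact Or.inl h1
    by_cases h2 : ∀ z, Q z = -(Complex.I * P z)
    · exact Or.inr h2
    exfalso
    push_neg at h1 h2
    obtain ⟨z₀, hz₀⟩ := h1
    obtain ⟨z₁, hz₁⟩ := h2
    have hz₀' : Q z₀ = -(Complex.I * P z₀) := (hpt z₀).resolve_left hz₀
    have hz₁' : Q z₁ = Complex.I * P z₁ := (hpt z₁).resolve_right hz₁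
    have hP0 : ∀ z, P z = 0 → z = 0 := by
      intro z h
      have := hPn z
      rw [h, Complex.normSq_zero] at this
      exact Complex.normSq_eq_zero.mp this.symm
    rcases hpt (z₀ + z₁) with h | h
    · rw [hQadd, hPadd, hz₀', hz₁'] at h
      have : Complex.I * P z₀ = 0 := by
        have : (2 : ℂ) * (Complex.I * P z₀) = 0 := by linear_combination -h
        simpa using this
      have : P z₀ = 0 := by
        simpa [Complex.I_ne_zero] using this
      have hz0 : z₀ = 0 := hP0 _ this
      apply hz₀
      rw [hz0]
      have : P (0:ℂ) = 0 := by
        have := hPsmul 0 0; simpa using this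
      have hQ0 : Q (0:ℂ) = 0 := by
        have := hsmul1 0 0 Complex.I; simpa using this
      rw [hQ0, this, mul_zero]
    · rw [hQadd, hPadd, hz₀', hz₁'] at h
      have : Complex.I * P z₁ = 0 := by
        have : (2 : ℂ) * (Complex.I * P z₁) = 0 := by linear_combination h
        simpa using this
      have : P z₁ = 0 := by simpa [Complex.I_ne_zero] using this
      have hz1 : z₁ = 0 := hP0 _ this
      apply hz₁
      rw [hz1]
      have hP00 : P (0:ℂ) = 0 := by have := hPsmul 0 0; simpa using this
      have hQ0 : Q (0:ℂ) = 0 := by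
        have := hsmul1 0 0 Complex.I; simpa using this
      rw [hQ0, hP00, mul_zero, neg_zero]
  have hPcls := isomClass P hPadd hPsmul hPn
  have hc1 : Complex.normSq (P 1) = 1 := by simpa using hPn 1
  refine ⟨P 1, hc1, ?_⟩
  rcases hPcls with hPc | hPc <;> rcases hglob with hg | hg
  · left
    intro z w
    rw [hrep, hg, hPc z]
    conv_rhs => rw [← Complex.re_add_im w]
    ring
  · right; right; left
    intro z w
    rw [hrep, hg, hPc z, conj_expand w]
    ring
  · right; left
    intro z w
    rw [hrep, hg, hPc z]
    conv_rhs => rw [← Complex.re_add_im w]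
    ring
  · right; right; right
    intro z w
    rw [hrep, hg, hPc z, map_mul, conj_expand w]
    ring

noncomputable def formEquiv (A B C : ℝ) (hA : A ≠ 0) (hC : C ≠ 0) : (ℝ × ℝ) ≃ₗ[ℝ] ℂ where
  toFun x := Complex.mk (A * x.1 + B * x.2) (C * x.2)
  map_add' x y := by
    rw [Complex.ext_iff]
    simp
    constructor <;> ring
  map_smul' r x := by
    rw [Complex.ext_iff]
    simp [Complex.real_smul]
    constructor <;> ring
  invFun z := ((z.re - B * (z.im / C)) / A, z.im / C)
  left_inv x := by
    have : C * x.2 / C = x.2 := by field_simp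
    simp only []
    rw [Prod.ext_iff]
    constructor
    · simp only []
      field_simp
      ring
    · simpa using this
  right_inv z := by
    rw [Complex.ext_iff]
    constructor
    · simp only []
      field_simp
      ring
    · simp only []
      field_simp

noncomputable def mulEquiv (u : ℂ) (hu : u ≠ 0) : ℂ ≃ₗ[ℝ] ℂ where
  toFun z := u * z
  map_add' x y := by ring
  map_smul' r x := by simp [Complex.real_smul]; ring
  invFun z := u⁻¹ * z
  left_inv z := by field_simp
  right_inv z := by field_simp

theorem stmt5 (m k n : ℤ)
    (f : ℝ × ℝ → ℝ)
    (hf : ∀ x : ℝ × ℝ, f x = (m : ℝ) * x.1 ^ 2 + (k : ℝ) * x.1 * x.2 + (n : ℝ) * x.2 ^ 2)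
    (hpos : ∀ x : ℝ × ℝ, x ≠ 0 → 0 < f x)
    (hpairing : ∃ s : (ℝ × ℝ) →ₗ[ℝ] (ℝ × ℝ) →ₗ[ℝ] ℝ × ℝ,
      (∀ x y : ℝ × ℝ, IsIntVec x → IsIntVec y → IsIntVec (s x y)) ∧
      (∀ x y : ℝ × ℝ, f (s x y) = f x * f y)) :
    ∃ φ : (ℝ × ℝ) ≃ₗ[ℝ] ℂ,
      0 < (φ (1, 0)).re * (φ (0, 1)).im - (φ (0, 1)).re * (φ (1, 0)).im ∧
      (∀ x : ℝ × ℝ, f x = Complex.normSq (φ x)) ∧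
      ∃ L : Set ℂ, L = (fun x => φ x) '' {x | IsIntVec x} ∧
        ((∀ z ∈ L, ∀ w ∈ L, z * w ∈ L) ∨
         (∀ z ∈ L, ∀ w ∈ L, (starRingEnd ℂ) z * w ∈ L) ∨
         (∀ z ∈ L, ∀ w ∈ L, z * (starRingEnd ℂ) w ∈ L) ∨
         (∀ z ∈ L, ∀ w ∈ L, (starRingEnd ℂ) (z * w) ∈ L)) := by
  obtain ⟨s, hsInt, hsNorm⟩ := hpairing
  have hm : (0:ℝ) < (m:ℝ) := by
    have h := hpos (1,0) (by simp [Prod.ext_iff])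
    rw [hf] at h
    simpa using h
  have hD : (0:ℝ) < 4*(m:ℝ)*(n:ℝ) - (k:ℝ)^2 := by
    have hne : ((-(k:ℝ), 2*(m:ℝ)) : ℝ × ℝ) ≠ 0 := by
      intro hc
      rw [Prod.ext_iff] at hc
      have h2 := hc.2
      simp at h2
      rw [h2] at hm
      simp at hm
    have h := hpos _ hne
    rw [hf] at h
    simp only [] at h
    nlinarith
  set A := Real.sqrt (m:ℝ) with hAdef
  have hA : 0 < A := Real.sqrt_pos.mpr hm
  have hA2 : A^2 = (m:ℝ) := Real.sq_sqrt hm.le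
  set E := Real.sqrt (4*(m:ℝ)*(n:ℝ) - (k:ℝ)^2) with hEdef
  have hE : 0 < E := Real.sqrt_pos.mpr hD
  have hE2 : E^2 = 4*(m:ℝ)*(n:ℝ) - (k:ℝ)^2 := Real.sq_sqrt hD.le
  set B := (k:ℝ)/(2*A) with hBdef
  set C := E/(2*A) with hCdef
  have hC : 0 < C := div_pos hE (by linarith)
  set φ₀ := formEquiv A B C (ne_of_gt hA) (ne_of_gt hC) with hφ₀def
  have hφ₀ : ∀ x : ℝ × ℝ, φ₀ x = Complex.mk (A*x.1 + B*x.2) (C*x.2) := fun _ => rfl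
  have hnorm0 : ∀ x : ℝ × ℝ, f x = Complex.normSq (φ₀ x) := by
    intro x
    rw [hf, hφ₀, Complex.normSq_mk, hBdef, hCdef]
    field_simp
    ring_nf
    linear_combination (4*(n:ℝ)*x.2^2 - 4*x.1^2*A^2) * hA2 - x.2^2 * hE2
  -- the conjugated pairing on ℂ
  set S : ℂ → ℂ → ℂ := fun z w => φ₀ (s (φ₀.symm z) (φ₀.symm w)) with hSdef
  have hSapp : ∀ x y : ℝ × ℝ, S (φ₀ x) (φ₀ y) = φ₀ (s x y) := by
    intro x y
    rw [hSdef]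
    simp [LinearEquiv.symm_apply_apply]
  obtain ⟨c, hc1, hcase⟩ := keyClass S
    (by intro z z' w; simp [hSdef, map_add])
    (by intro r z w
        simp only [hSdef, ← Complex.real_smul, map_smul, LinearMap.smul_apply])
    (by intro z w w'; simp [hSdef, map_add])
    (by intro r z w
        simp only [hSdef, ← Complex.real_smul, map_smul, LinearMap.smul_apply, map_smul])
    (by intro z w
        rw [hSdef]
        simp only []
        rw [← hnorm0, hsNorm, hnorm0, hnorm0, LinearEquiv.apply_symm_apply,
          LinearEquiv.apply_symm_apply])
  -- common facts
  have hne : ∀ u : ℂ, Complex.normSq u = 1 → u ≠ 0 := by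
    intro u hu h0
    rw [h0, Complex.normSq_zero] at hu
    norm_num at hu
  have horient : ∀ (u : ℂ) (hu0 : u ≠ 0), Complex.normSq u = 1 →
      0 < (((φ₀.trans (mulEquiv u hu0)) (1, 0)).re * ((φ₀.trans (mulEquiv u hu0)) (0, 1)).im -
        ((φ₀.trans (mulEquiv u hu0)) (0, 1)).re * ((φ₀.trans (mulEquiv u hu0)) (1, 0)).im) := by
    intro u hu0 hu1
    have hφ : ∀ x : ℝ × ℝ, (φ₀.trans (mulEquiv u hu0)) x = u * φ₀ x := fun _ => rfl
    have hnu' : u.re*u.re + u.im*u.im = 1 := by rw [← Complex.normSq_apply]; exact hu1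
    have key : ((φ₀.trans (mulEquiv u hu0)) (1, 0)).re * ((φ₀.trans (mulEquiv u hu0)) (0, 1)).im -
        ((φ₀.trans (mulEquiv u hu0)) (0, 1)).re * ((φ₀.trans (mulEquiv u hu0)) (1, 0)).im
        = A * C := by
      rw [hφ, hφ, hφ₀, hφ₀]
      simp only [Complex.mul_re, Complex.mul_im]
      linear_combination (A*C) * hnu'
    rw [key]
    exact mul_pos hA hC
  have hnormφ : ∀ (u : ℂ) (hu0 : u ≠ 0), Complex.normSq u = 1 →
      ∀ x : ℝ × ℝ, f x = Complex.normSq ((φ₀.trans (mulEquiv u hu0)) x) := by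
    intro u hu0 hu1 x
    have hφ : (φ₀.trans (mulEquiv u hu0)) x = u * φ₀ x := rfl
    rw [hφ, Complex.normSq_mul, hu1, one_mul]
    exact hnorm0 x
  rcases hcase with h1 | h2 | h3 | h4
  · -- σ₁ : u = c
    have hu0 := hne c hc1
    refine ⟨φ₀.trans (mulEquiv c hu0), horient c hu0 hc1, hnormφ c hu0 hc1, _, rfl, ?_⟩
    left
    rintro z ⟨x, hx, rfl⟩ w ⟨y, hy, rfl⟩
    refine ⟨s x y, hsInt x y hx hy, ?_⟩
    show c * φ₀ (s x y) = (c * φ₀ x) * (c * φ₀ y)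
    rw [← hSapp, h1]
    ring
  · -- σ₂ : u = conj c
    set u := (starRingEnd ℂ) c with hudef
    have hu1 : Complex.normSq u = 1 := by rw [hudef, Complex.normSq_conj]; exact hc1
    have hu0 := hne u hu1
    refine ⟨φ₀.trans (mulEquiv u hu0), horient u hu0 hu1, hnormφ u hu0 hu1, _, rfl, ?_⟩
    right; left
    rintro z ⟨x, hx, rfl⟩ w ⟨y, hy, rfl⟩
    refine ⟨s x y, hsInt x y hx hy, ?_⟩
    show u * φ₀ (s x y) = (starRingEnd ℂ) (u * φ₀ x) * (u * φ₀ y)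
    rw [← hSapp, h2, map_mul, hudef, Complex.conj_conj]
    ring
  · -- σ₃ : u = conj c
    set u := (starRingEnd ℂ) c with hudef
    have hu1 : Complex.normSq u = 1 := by rw [hudef, Complex.normSq_conj]; exact hc1
    have hu0 := hne u hu1
    refine ⟨φ₀.trans (mulEquiv u hu0), horient u hu0 hu1, hnormφ u hu0 hu1, _, rfl, ?_⟩
    right; right; left
    rintro z ⟨x, hx, rfl⟩ w ⟨y, hy, rfl⟩
    refine ⟨s x y, hsInt x y hx hy, ?_⟩
    show u * φ₀ (s x y) = (u * φ₀ x) * (starRingEnd ℂ) (u * φ₀ y)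
    rw [← hSapp, h3, map_mul, hudef, Complex.conj_conj]
    ring
  · -- σ₄ : u = exp(-(arg c)/3 * I)
    set u := Complex.exp ((-(Complex.arg c)/3 : ℝ) * Complex.I) with hudef
    have hu1 : Complex.normSq u = 1 := by
      rw [hudef, Complex.normSq_eq_norm_sq, Complex.norm_exp_ofReal_mul_I]
      norm_num
    have hu0 := hne u hu1
    have habs : ‖c‖ = 1 := by
      rw [Complex.norm_def, hc1, Real.sqrt_one]
    have hcu : (starRingEnd ℂ) u = Complex.exp (((Complex.arg c)/3 : ℝ) * Complex.I) := by
      rw [hudef, ← Complex.exp_conj, map_mul, Complex.conj_ofReal, Complex.conj_I]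
      congr 1
      push_cast
      ring
    have hc3 : ((starRingEnd ℂ) u)^3 = c := by
      rw [hcu, ← Complex.exp_nat_mul]
      have : ((3:ℕ) : ℂ) * (((Complex.arg c)/3 : ℝ) * Complex.I) = (Complex.arg c : ℝ) * Complex.I := by
        push_cast
        ring
      rw [this]
      have := Complex.norm_mul_exp_arg_mul_I c
      rw [habs] at this
      simpa using this
    have huu : u * (starRingEnd ℂ) u = 1 := by
      rw [Complex.mul_conj, hu1]
      norm_num
    refine ⟨φ₀.trans (mulEquiv u hu0), horient u hu0 hu1, hnormφ u hu0 hu1, _, rfl, ?_⟩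
    right; right; right
    rintro z ⟨x, hx, rfl⟩ w ⟨y, hy, rfl⟩
    refine ⟨s x y, hsInt x y hx hy, ?_⟩
    show u * φ₀ (s x y) = (starRingEnd ℂ) ((u * φ₀ x) * (u * φ₀ y))
    rw [← hSapp, h4, ← hc3]
    simp only [map_mul]
    linear_combination ((starRingEnd ℂ) u)^2 * ((starRingEnd ℂ) (φ₀ x)) *
      ((starRingEnd ℂ) (φ₀ y)) * huu
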